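/- Fix α > 0, β > 0 and a > 0, b > 0. Let N_A : ℝ → ℝ and N_B : ℝ → ℝ be nonnegative functions with N_A(t)/t → a and N_B(t)/t → b as t → ∞. Define, for t > 0, log Ẽ(t) = log Γ(N_A(t) + β) + log Γ(N_B(t) + α) − log Γ(N_A(t) + N_B(t) + α + β) − log B(α,β) + (N_A(t) + N_B(t)) · log 2, where B(α,β) = Γ(α)Γ(β)/Γ(α+β). Then (log Ẽ(t))/t → a·log(2a/(a+b)) + b·log(2b/(a+b)) as t → ∞. -/

import Mathlib

open Real Filter Stirling

lemma g_mono {p q : ℝ} (hp : 1 ≤ p) (hpq : p ≤ q) :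
    p * Real.log p - p ≤ q * Real.log q - q := by
  have hp0 : 0 < p := by linarith
  have hq0 : 0 < q := by linarith
  have h1 : Real.log p - Real.log q ≤ p / q - 1 := by
    have := Real.log_le_sub_one_of_pos (show 0 < p / q by positivity)
    rwa [Real.log_div hp0.ne' hq0.ne'] at this
  have h2 : (0 : ℝ) - Real.log q ≤ 1 / q - 1 := by
    have := Real.log_le_sub_one_of_pos (show 0 < 1 / q by positivity)
    rwa [Real.log_div one_ne_zero hq0.ne', Real.log_one] at this
  have h1'' : q * (Real.log p - Real.log q) ≤ p - q := by
    calc q * (Real.log p - Real.log q) ≤ q * (p / q - 1) :=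
          mul_le_mul_of_nonneg_left h1 hq0.le
      _ = p - q := by field_simp
  have h2'' : q * (0 - Real.log q) ≤ 1 - q := by
    calc q * (0 - Real.log q) ≤ q * (1 / q - 1) :=
          mul_le_mul_of_nonneg_left h2 hq0.le
      _ = 1 - q := by field_simp
  have key : 0 ≤ q * ((q * Real.log q - q) - (p * Real.log p - p)) := by
    nlinarith [mul_le_mul_of_nonneg_left h1'' hp0.le,
      mul_le_mul_of_nonneg_right h2'' (sub_nonneg.2 hpq),
      mul_nonneg (sub_nonneg.2 hp) (sub_nonneg.2 hpq)]
  nlinarith [key, hq0]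

lemma g_diff {p q : ℝ} (hp : 1 ≤ p) (hpq : p ≤ q) :
    q * Real.log q - q - (p * Real.log p - p) ≤ (q - p) * Real.log q := by
  have hp0 : 0 < p := by linarith
  have hq0 : 0 < q := by linarith
  have h1 : Real.log q - Real.log p ≤ q / p - 1 := by
    have := Real.log_le_sub_one_of_pos (show 0 < q / p by positivity)
    rwa [Real.log_div hq0.ne' hp0.ne'] at this
  have h1'' : p * (Real.log q - Real.log p) ≤ q - p := by
    calc p * (Real.log q - Real.log p) ≤ p * (q / p - 1) :=
          mul_le_mul_of_nonneg_left h1 hp0.le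
      _ = q - p := by field_simp
  nlinarith [h1'']


lemma fact_bound : ∀ᶠ n : ℕ in atTop,
    |Real.log (Nat.factorial n : ℝ) - ((n : ℝ) * Real.log n - n)| ≤ 2 * Real.log n + 2 := by
  have hlim := Stirling.tendsto_stirlingSeq_sqrt_pi
  have h1 : ∀ᶠ n : ℕ in atTop, stirlingSeq n < 2 := by
    refine hlim.eventually (eventually_lt_nhds ?_)
    rw [show (2:ℝ) = Real.sqrt 4 by rw [show (4:ℝ) = 2^2 by norm_num, Real.sqrt_sq]; norm_num]
    exact Real.sqrt_lt_sqrt Real.pi_pos.le (by linarith [Real.pi_lt_d2])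
  have h2 : ∀ᶠ n : ℕ in atTop, (1:ℝ)/2 < stirlingSeq n := by
    refine hlim.eventually (eventually_gt_nhds ?_)
    have : (1:ℝ) ≤ Real.sqrt π := by
      rw [show (1:ℝ) = Real.sqrt 1 by simp]
      exact Real.sqrt_le_sqrt (by linarith [Real.pi_gt_three])
    linarith
  filter_upwards [h1, h2, eventually_ge_atTop 1] with n hn2 hnh hn1
  have hn0 : (0:ℝ) < n := by exact_mod_cast hn1
  have hform := Stirling.log_stirlingSeq_formula n
  have hlogdiv : Real.log ((n : ℝ) / Real.exp 1) = Real.log n - 1 := by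
    rw [Real.log_div hn0.ne' (Real.exp_ne_zero 1), Real.log_exp]
  have h2n : Real.log (2 * (n:ℝ)) = Real.log 2 + Real.log n := Real.log_mul two_ne_zero hn0.ne'
  have habs : |Real.log (stirlingSeq n)| ≤ 1 := by
    rw [abs_le]
    constructor
    · have : Real.log ((1:ℝ)/2) ≤ Real.log (stirlingSeq n) :=
        Real.log_le_log (by norm_num) hnh.le
      have h12 : Real.log ((1:ℝ)/2) = - Real.log 2 := by
        rw [Real.log_div one_ne_zero two_ne_zero, Real.log_one]; ring
      have := Real.log_two_lt_d9
      linarith [this]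
    · have hpos : 0 < stirlingSeq n := lt_trans (by norm_num) hnh
      have hle : Real.log (stirlingSeq n) ≤ Real.log 2 := Real.log_le_log hpos hn2.le
      linarith [Real.log_two_lt_d9]
  have hexp : (n:ℝ) * (Real.log n - 1) = (n:ℝ) * Real.log n - n := by ring
  rw [hlogdiv, h2n, hexp] at hform
  have hkey : Real.log (Nat.factorial n : ℝ) - ((n:ℝ) * Real.log n - n)
      = Real.log (stirlingSeq n) + 1/2 * (Real.log 2 + Real.log n) := by linarith
  rw [hkey]
  have habs2 : |Real.log (stirlingSeq n) + 1/2 * (Real.log 2 + Real.log n)|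
      ≤ |Real.log (stirlingSeq n)| + 1/2 * (Real.log 2 + Real.log n) := by
    have h0 : 0 ≤ 1/2 * (Real.log 2 + Real.log n) := by positivity
    calc |Real.log (stirlingSeq n) + 1/2 * (Real.log 2 + Real.log n)|
        ≤ |Real.log (stirlingSeq n)| + |1/2 * (Real.log 2 + Real.log n)| := abs_add_le _ _
      _ = |Real.log (stirlingSeq n)| + 1/2 * (Real.log 2 + Real.log n) := by
          rw [abs_of_nonneg h0]
  have hlogn : 0 ≤ Real.log (n:ℝ) := Real.log_nonneg (by exact_mod_cast hn1)
  have hlog2 : Real.log 2 ≤ 1 := by linarith [Real.log_two_lt_d9]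
  linarith


lemma phi_bound : ∀ᶠ x : ℝ in atTop,
    |Real.log (Real.Gamma x) - (x * Real.log x - x)| ≤ 5 * Real.log x + 20 := by
  obtain ⟨N, hN⟩ := eventually_atTop.mp fact_bound
  filter_upwards [eventually_ge_atTop ((N : ℝ) + 4)] with x hx
  have hx4 : (4:ℝ) ≤ x := by
    have : (0:ℝ) ≤ N := Nat.cast_nonneg N
    linarith
  have hx0 : (0:ℝ) < x := by linarith
  have hn_le : ((⌊x⌋₊:ℕ):ℝ) ≤ x := Nat.floor_le hx0.le
  have hx_lt : x < ((⌊x⌋₊:ℕ):ℝ) + 1 := Nat.lt_floor_add_one x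
  have hnN4 : N + 4 ≤ ⌊x⌋₊ := by
    apply Nat.le_floor
    push_cast
    linarith
  obtain ⟨m, hm⟩ : ∃ m, ⌊x⌋₊ = m + 1 := ⟨⌊x⌋₊ - 1, by omega⟩
  rw [hm] at hn_le hx_lt hnN4
  have hmN : N ≤ m := by omega
  have hnN : N ≤ m + 1 := by omega
  have hm1 : 1 ≤ m := by omega
  have hm1' : (1:ℝ) ≤ (m:ℝ) := by exact_mod_cast hm1
  have hn2 : (2:ℝ) ≤ ((m:ℝ) + 1) := by linarith
  have hn_le' : ((m:ℝ) + 1) ≤ x := by exact_mod_cast hn_le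
  have hx_lt' : x < (m:ℝ) + 2 := by push_cast at hx_lt; linarith
  have hm0 : (0:ℝ) < m := by linarith
  have hΓn : Real.Gamma ((m:ℝ) + 1) = (Nat.factorial m : ℝ) := Real.Gamma_nat_eq_factorial m
  have hΓn1 : Real.Gamma ((m:ℝ) + 2) = (Nat.factorial (m+1) : ℝ) := by
    have := Real.Gamma_nat_eq_factorial (m+1)
    push_cast at this ⊢
    convert this using 2
    ring
  have hfm := hN m hmN
  have hfn := hN (m+1) hnN
  have hlogx0 : 0 ≤ Real.log x := Real.log_nonneg (by linarith)
  have hlogm_le : Real.log (m:ℝ) ≤ Real.log x := Real.log_le_log hm0 (by linarith)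
  have hlogn_le : Real.log ((m:ℝ)+1) ≤ Real.log x := by
    have := Real.log_le_log (show (0:ℝ) < (m:ℝ)+1 by linarith) hn_le'
    push_cast at this ⊢
    linarith
  rw [abs_le] at hfm hfn ⊢
  push_cast at hfn
  constructor
  · -- lower bound
    have hΓle : Real.Gamma ((m:ℝ)+1) ≤ Real.Gamma x :=
      Real.Gamma_strictMonoOn_Ici.monotoneOn (Set.mem_Ici.mpr hn2)
        (Set.mem_Ici.mpr (by linarith)) hn_le'
    have hΓpos : (0:ℝ) < Real.Gamma ((m:ℝ)+1) := by
      rw [hΓn]; exact_mod_cast Nat.factorial_pos m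
    have hlog_low : Real.log (Nat.factorial m : ℝ) ≤ Real.log (Real.Gamma x) := by
      rw [← hΓn]; exact Real.log_le_log hΓpos hΓle
    have hgd := g_diff hm1' (show (m:ℝ) ≤ x by linarith)
    have hxm : (x - (m:ℝ)) * Real.log x ≤ 2 * Real.log x :=
      mul_le_mul_of_nonneg_right (by linarith) hlogx0
    linarith [hfm.1]
  · -- upper bound
    have hseg : x ∈ segment ℝ ((m:ℝ)+1) ((m:ℝ)+2) := by
      rw [segment_eq_Icc (by linarith : ((m:ℝ)+1) ≤ (m:ℝ)+2)]
      exact ⟨hn_le', hx_lt'.le⟩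
    have hup := Real.convexOn_log_Gamma.le_on_segment
      (Set.mem_Ioi.mpr (show (0:ℝ) < (m:ℝ)+1 by linarith))
      (Set.mem_Ioi.mpr (show (0:ℝ) < (m:ℝ)+2 by linarith)) hseg
    simp only [Function.comp] at hup
    rw [hΓn, hΓn1] at hup
    have hfle : Real.log (Nat.factorial m : ℝ) ≤ Real.log (Nat.factorial (m+1) : ℝ) :=
      Real.log_le_log (by exact_mod_cast Nat.factorial_pos m)
        (by exact_mod_cast Nat.factorial_le (Nat.le_succ m))
    rw [max_eq_right hfle] at hup
    have hgm := g_mono (show (1:ℝ) ≤ (m:ℝ)+1 by linarith) hn_le'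
    linarith [hfn.2]


lemma phi_tendsto {f : ℝ → ℝ} {c : ℝ} (hc : 0 < c)
    (hf : Filter.Tendsto (fun t => f t / t) Filter.atTop (nhds c)) :
    Filter.Tendsto
      (fun t => (Real.log (Real.Gamma (f t)) - (f t * Real.log (f t) - f t)) / t)
      Filter.atTop (nhds 0) := by
  have hfa : Tendsto f atTop atTop := by
    have h1 : ∀ᶠ t : ℝ in atTop, c / 2 * t ≤ f t := by
      filter_upwards [hf.eventually (eventually_gt_nhds (half_lt_self hc)),
        eventually_gt_atTop (0:ℝ)] with t h ht
      rw [lt_div_iff₀ ht] at h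
      linarith
    exact tendsto_atTop_mono' atTop h1 (Tendsto.const_mul_atTop (half_pos hc) tendsto_id)
  have hlog0 : Tendsto (fun t => Real.log (f t) / t) atTop (nhds 0) := by
    have T1 : Tendsto (fun t => Real.log (f t / t) / t) atTop (nhds 0) :=
      (hf.log hc.ne').div_atTop tendsto_id
    have T2 : Tendsto (fun t : ℝ => Real.log t / t) atTop (nhds 0) :=
      Real.isLittleO_log_id_atTop.tendsto_div_nhds_zero
    have := T1.add T2
    rw [add_zero] at this
    apply this.congr'
    filter_upwards [hfa.eventually (eventually_gt_atTop (0:ℝ)),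
      eventually_gt_atTop (0:ℝ)] with t hft ht
    rw [Real.log_div hft.ne' ht.ne']
    ring
  have hg : Tendsto (fun t => (5 * Real.log (f t) + 20) / t) atTop (nhds 0) := by
    have := (hlog0.const_mul 5).add
      ((tendsto_const_nhds (x := (20:ℝ))).div_atTop (tendsto_id (α := ℝ)))
    rw [mul_zero, add_zero] at this
    apply this.congr fun t => by simp only [id]; ring
  apply squeeze_zero_norm' _ hg
  filter_upwards [hfa.eventually phi_bound, eventually_gt_atTop (0:ℝ)] with t hb ht
  rw [norm_eq_abs, abs_div, abs_of_pos ht, div_le_div_iff_of_pos_right]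
  · exact hb
  · exact ht

theorem log_Etilde_growth_rate (α β a b : ℝ) (hα : 0 < α) (hβ : 0 < β)
    (ha : 0 < a) (hb : 0 < b)
    (NA NB : ℝ → ℝ) (hNA : ∀ t : ℝ, 0 ≤ NA t) (hNB : ∀ t : ℝ, 0 ≤ NB t)
    (hNAlim : Filter.Tendsto (fun t : ℝ => NA t / t) Filter.atTop (nhds a))
    (hNBlim : Filter.Tendsto (fun t : ℝ => NB t / t) Filter.atTop (nhds b)) :
    Filter.Tendsto
      (fun t : ℝ =>
        (Real.log (Real.Gamma (NA t + β)) + Real.log (Real.Gamma (NB t + α))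
            - Real.log (Real.Gamma (NA t + NB t + α + β))
            - Real.log (Real.Gamma α * Real.Gamma β / Real.Gamma (α + β))
            + (NA t + NB t) * Real.log 2) / t)
      Filter.atTop
      (nhds (a * Real.log (2 * a / (a + b)) + b * Real.log (2 * b / (a + b)))) := by
  have hab : 0 < a + b := by linarith
  have hconst : ∀ C : ℝ, Tendsto (fun t : ℝ => C / t) atTop (nhds 0) :=
    fun C => tendsto_const_nhds.div_atTop tendsto_id
  have hu : Tendsto (fun t => (NA t + β) / t) atTop (nhds a) := by
    have := hNAlim.add (hconst β)
    rw [add_zero] at this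
    exact this.congr fun t => by rw [← add_div]
  have hv : Tendsto (fun t => (NB t + α) / t) atTop (nhds b) := by
    have := hNBlim.add (hconst α)
    rw [add_zero] at this
    exact this.congr fun t => by rw [← add_div]
  have hw : Tendsto (fun t => (NA t + NB t + α + β) / t) atTop (nhds (a + b)) := by
    have := hu.add hv
    exact this.congr fun t => by rw [← add_div]; ring_nf
  have P1 := phi_tendsto ha hu
  have P2 := phi_tendsto hb hv
  have P3 := phi_tendsto hab hw
  have hA := ((hu.mul (hu.log ha.ne')).add (hv.mul (hv.log hb.ne'))).sub
    (hw.mul (hw.log hab.ne'))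
  have hB := hconst (Real.log (Real.Gamma α * Real.Gamma β / Real.Gamma (α + β)))
  have hC : Tendsto (fun t => (NA t + NB t) / t * Real.log 2) atTop
      (nhds ((a + b) * Real.log 2)) := by
    have := (hNAlim.add hNBlim).mul_const (Real.log 2)
    exact this.congr fun t => by rw [← add_div]
  have total := ((((P1.add P2).sub P3).add hA).sub hB).add hC
  have hval : (((0 + 0 - 0 : ℝ) +
        (a * Real.log a + b * Real.log b - (a + b) * Real.log (a + b)) - 0)
        + (a + b) * Real.log 2)
      = a * Real.log (2 * a / (a + b)) + b * Real.log (2 * b / (a + b)) := by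
    rw [Real.log_div (by positivity) hab.ne', Real.log_div (by positivity) hab.ne',
      Real.log_mul two_ne_zero ha.ne', Real.log_mul two_ne_zero hb.ne']
    ring
  rw [← hval]
  refine Tendsto.congr' ?_ total
  filter_upwards [eventually_gt_atTop (0:ℝ)] with t ht
  have hu0 : 0 < NA t + β := by linarith [hNA t]
  have hv0 : 0 < NB t + α := by linarith [hNB t]
  have hw0 : 0 < NA t + NB t + α + β := by linarith [hNA t, hNB t]
  rw [Real.log_div hu0.ne' ht.ne', Real.log_div hv0.ne' ht.ne',
    Real.log_div hw0.ne' ht.ne']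
  field_simp
  ring
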